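/- Assume k is even. Then the kernel of s₁ − 1 equals the range of s₁ − 1, and both equal the F₂-span of the odd-indexed basis vectors {e_j : 1 ≤ j ≤ k, j odd}; in particular each has F₂-dimension k/2. -/

import Mathlib

/-- The `j`-th standard basis vector of `(ZMod 2)^k`, 1-indexed; by convention it is `0`
for `j = 0` (and for `j > k`). -/
def eVec (k j : ℕ) : Fin k → ZMod 2 := fun i => if (i : ℕ) + 1 = j then 1 else 0

/-- The involution `s₁`, defined on the standard basis by `s₁ e_j = e_j + e_{j-1}` if
`j ≡ k (mod 2)` and `s₁ e_j = e_j` otherwise. -/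
noncomputable def sOne (k : ℕ) : Module.End (ZMod 2) (Fin k → ZMod 2) :=
  (Pi.basisFun (ZMod 2) (Fin k)).constr (ZMod 2) fun i =>
    if ((i : ℕ) + 1) % 2 = k % 2 then eVec k ((i : ℕ) + 1) + eVec k (i : ℕ)
    else eVec k ((i : ℕ) + 1)

/-- The involution `s₂`, defined on the standard basis by `s₂ e_j = e_j + e_{j-1}` if
`j ≢ k (mod 2)` and `s₂ e_j = e_j` otherwise. -/
noncomputable def sTwo (k : ℕ) : Module.End (ZMod 2) (Fin k → ZMod 2) :=
  (Pi.basisFun (ZMod 2) (Fin k)).constr (ZMod 2) fun i =>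
    if ((i : ℕ) + 1) % 2 ≠ k % 2 then eVec k ((i : ℕ) + 1) + eVec k (i : ℕ)
    else eVec k ((i : ℕ) + 1)

/-- `t = s₂ ∘ s₁`. -/
noncomputable def tEnd (k : ℕ) : Module.End (ZMod 2) (Fin k → ZMod 2) :=
  sTwo k * sOne k

theorem sOne_apply' (k : ℕ) (v : Fin k → ZMod 2) (m : Fin k) :
    sOne k v m = v m + if m.val % 2 = k % 2 then
      (if h : m.val + 1 < k then v ⟨m.val+1, h⟩ else 0) else 0 := by
  simp only [sOne, Module.Basis.constr_apply_fintype, Pi.basisFun_equivFun, LinearEquiv.refl_apply,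
    Finset.sum_apply, Pi.smul_apply, smul_eq_mul]
  have key : ∀ x : Fin k,
      v x * (if (↑x + 1) % 2 = k % 2 then eVec k (↑x + 1) + eVec k ↑x else eVec k (↑x + 1)) m
      = (if x = m then v m else 0) +
        (if m.val % 2 = k % 2 then (if x.val = m.val + 1 then v x else 0) else 0) := by
    intro x
    have e1 : eVec k (x.val + 1) m = if x = m then 1 else 0 := by
      simp only [eVec]; exact if_congr (by rw [Fin.ext_iff]; omega) rfl rfl
    have e2 : eVec k x.val m = if x.val = m.val + 1 then 1 else 0 := by
      simp only [eVec]; exact if_congr (by omega) rfl rfl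
    by_cases hA : (x.val + 1) % 2 = k % 2
    · rw [if_pos hA, Pi.add_apply, e1, e2]
      by_cases hB : x = m
      · subst hB
        rw [if_pos rfl, if_pos rfl, if_neg (by omega : ¬ x.val = x.val + 1),
          if_neg (show ¬ x.val % 2 = k % 2 by omega)]
        ring
      · rw [if_neg hB, if_neg hB]
        by_cases hC : x.val = m.val + 1
        · rw [if_pos hC, if_pos (show m.val % 2 = k % 2 by omega), if_pos hC]; ring
        · rw [if_neg hC]
          simp [hC]
    · rw [if_neg hA, e1]
      by_cases hB : x = m
      · subst hB
        rw [if_pos rfl, if_pos rfl, if_pos (show x.val % 2 = k % 2 by omega),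
          if_neg (by omega : ¬ x.val = x.val + 1)]
        ring
      · rw [if_neg hB, if_neg hB]
        by_cases hC : x.val = m.val + 1
        · rw [if_neg (show ¬ m.val % 2 = k % 2 by omega)]; simp [Fin.ext_iff]
        · simp [hC]
  rw [Finset.sum_congr rfl fun x _ => key x, Finset.sum_add_distrib,
    Finset.sum_ite_eq' Finset.univ m]
  simp only [Finset.mem_univ, if_true]
  congr 1
  by_cases hc : m.val % 2 = k % 2
  · simp only [hc, if_true]
    by_cases h : m.val + 1 < k
    · rw [dif_pos h, Finset.sum_eq_single (⟨m.val+1, h⟩ : Fin k)]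
      · simp
      · intro b _ hb; rw [if_neg (by simpa [Fin.ext_iff] using hb)]
      · simp
    · rw [dif_neg h, Finset.sum_eq_zero]
      intro b _; rw [if_neg (by omega)]
  · simp [hc]

theorem sOneSub_apply (k : ℕ) (v : Fin k → ZMod 2) (m : Fin k) :
    (sOne k - 1) v m = if m.val % 2 = k % 2 then
      (if h : m.val + 1 < k then v ⟨m.val+1, h⟩ else 0) else 0 := by
  have h := sOne_apply' k v m
  simp only [LinearMap.sub_apply, Module.End.one_apply, Pi.sub_apply, h]
  ring

/-- Assume `k` is even.  Then `ker (s₁ - 1) = range (s₁ - 1)`, and both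
equal the `F₂`-span of the odd-indexed standard basis vectors
`{e_j : 1 ≤ j ≤ k, j odd}`; in particular each has `F₂`-dimension `k/2`. -/
theorem ker_sOne_sub_one (k : ℕ) (hk : 1 ≤ k) (hke : Even k) :
    LinearMap.ker (sOne k - 1) = LinearMap.range (sOne k - 1) ∧
    LinearMap.ker (sOne k - 1) =
      Submodule.span (ZMod 2)
        {v : Fin k → ZMod 2 | ∃ j, 1 ≤ j ∧ j ≤ k ∧ Odd j ∧ v = eVec k j} ∧
    Module.finrank (ZMod 2) (LinearMap.ker (sOne k - 1)) = k / 2 ∧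
    Module.finrank (ZMod 2) (LinearMap.range (sOne k - 1)) = k / 2 := by
  have hk2 : k % 2 = 0 := Nat.even_iff.mp hke
  set A := sOne k - 1 with hA
  have hlt : ∀ m : Fin k, m.val % 2 = 0 → m.val + 1 < k := by
    intro m h; have := m.isLt; omega
  have ha_even : ∀ (v : Fin k → ZMod 2) (m : Fin k) (h : m.val % 2 = 0),
      A v m = v ⟨m.val + 1, hlt m h⟩ := by
    intro v m h
    rw [hA, sOneSub_apply, if_pos (by omega), dif_pos (hlt m h)]
  have ha_odd : ∀ (v : Fin k → ZMod 2) (m : Fin k), m.val % 2 = 1 → A v m = 0 := by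
    intro v m h
    rw [hA, sOneSub_apply, if_neg (by omega)]
  -- membership in the kernel means vanishing at odd 0-indexed coordinates
  have hker : ∀ v : Fin k → ZMod 2,
      v ∈ LinearMap.ker A ↔ ∀ m : Fin k, m.val % 2 = 1 → v m = 0 := by
    intro v
    rw [LinearMap.mem_ker]
    constructor
    · intro hv m hm
      have h1 : 1 ≤ m.val := by omega
      have hmlt : m.val - 1 < k := by omega
      have heq : A v ⟨m.val - 1, hmlt⟩ = v m := by
        rw [ha_even v ⟨m.val - 1, hmlt⟩ (by simp; omega)]
        congr 1
        exact Fin.ext (by simp; omega)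
      rw [← heq, hv]; rfl
    · intro hv
      funext m
      show A v m = 0
      rcases Nat.mod_two_eq_zero_or_one m.val with h | h
      · rw [ha_even v m h]
        exact hv _ (by simp; omega)
      · exact ha_odd v m h
  have h_kr : LinearMap.ker A = LinearMap.range A := by
    apply le_antisymm
    · intro v hv
      have hv' := (hker v).mp hv
      refine ⟨fun i => if h : 1 ≤ i.val then v ⟨i.val - 1, by omega⟩ else 0, ?_⟩
      funext m
      rcases Nat.mod_two_eq_zero_or_one m.val with h | h
      · rw [ha_even _ m h]
        simp only [dif_pos (by omega : 1 ≤ m.val + 1)]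
        exact congrArg v (Fin.ext (by simp))
      · rw [ha_odd _ m h, hv' m h]
    · rintro v ⟨w, rfl⟩
      rw [hker]
      intro m hm
      exact ha_odd w m hm
  have h_span : LinearMap.ker A =
      Submodule.span (ZMod 2)
        {v : Fin k → ZMod 2 | ∃ j, 1 ≤ j ∧ j ≤ k ∧ Odd j ∧ v = eVec k j} := by
    apply le_antisymm
    · intro v hv
      have hv' := (hker v).mp hv
      have hrep : v = ∑ i : Fin k, v i • eVec k (i.val + 1) := by
        funext m
        rw [Finset.sum_apply]
        rw [Finset.sum_eq_single m]
        · simp [eVec]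
        · intro b _ hb
          simp only [Pi.smul_apply, smul_eq_mul, eVec]
          rw [if_neg (fun hc => hb (Fin.ext (by omega))), mul_zero]
        · simp
      rw [hrep]
      apply Submodule.sum_mem
      intro i _
      rcases Nat.mod_two_eq_zero_or_one i.val with h | h
      · exact Submodule.smul_mem _ _ (Submodule.subset_span
          ⟨i.val + 1, by omega, by have := i.isLt; omega, by rw [Nat.odd_iff]; omega, rfl⟩)
      · rw [hv' i h, zero_smul]
        exact Submodule.zero_mem _
    · rw [Submodule.span_le]
      rintro v ⟨j, hj1, hjk, hjo, rfl⟩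
      rw [SetLike.mem_coe, hker]
      intro m hm
      have hj2 : j % 2 = 1 := Nat.odd_iff.mp hjo
      simp only [eVec]
      rw [if_neg (by omega)]
  have hfr : Module.finrank (ZMod 2) (Fin k → ZMod 2) = k := by
    simp [Module.finrank_pi]
  have hrn := LinearMap.finrank_range_add_finrank_ker A
  rw [hfr, ← h_kr] at hrn
  refine ⟨h_kr, h_span, ?_, ?_⟩
  · omega
  · rw [← h_kr]; omega
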